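/- Let z_1,…,z_n, z'_1,…,z'_n be i.i.d. uniform on {−1, +1}. Then with probability at least 1/10, |(1/n)Σ_{i=1}^n (z_i − z'_i)| ≥ 1/√n. -/

import Mathlib

open scoped Classical

namespace Stmt17Aux

noncomputable def g (b : Bool × Bool) : ℝ :=
  (if b.1 then (1 : ℝ) else -1) - (if b.2 then (1 : ℝ) else -1)

lemma g1 : ∑ b : Bool × Bool, g b = 0 := by
  simp [Fintype.sum_prod_type, g]

lemma g2 : ∑ b : Bool × Bool, (g b) ^ 2 = 8 := by
  simp [Fintype.sum_prod_type, g]; norm_num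

lemma g3 : ∑ b : Bool × Bool, (g b) ^ 3 = 0 := by
  simp [Fintype.sum_prod_type, g]; norm_num

lemma g4 : ∑ b : Bool × Bool, (g b) ^ 4 = 32 := by
  simp [Fintype.sum_prod_type, g]; norm_num

noncomputable def s (m : ℕ) (q : Fin m → Bool × Bool) : ℝ := ∑ i, g (q i)

lemma card_fun (m : ℕ) : (Finset.univ : Finset (Fin m → Bool × Bool)).card = 4 ^ m := by
  simp [Fintype.card_fun]

lemma cardB : (Finset.univ : Finset (Bool × Bool)).card = 4 := by simp

lemma moments (m : ℕ) :
    (∑ q : Fin m → Bool × Bool, s m q = 0) ∧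
    (∑ q : Fin m → Bool × Bool, (s m q) ^ 2 = 2 * m * 4 ^ m) ∧
    (∑ q : Fin m → Bool × Bool, (s m q) ^ 3 = 0) ∧
    (∑ q : Fin m → Bool × Bool, (s m q) ^ 4 = (12 * (m : ℝ) ^ 2 - 4 * m) * 4 ^ m) := by
  induction m with
  | zero => simp [s]
  | succ m ih =>
    obtain ⟨h1, h2, h3, h4⟩ := ih
    have key : ∀ k : ℕ, ∑ q : Fin (m + 1) → Bool × Bool, (s (m + 1) q) ^ k
        = ∑ b : Bool × Bool, ∑ q : Fin m → Bool × Bool, (g b + s m q) ^ k := by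
      intro k
      calc ∑ q : Fin (m + 1) → Bool × Bool, (s (m + 1) q) ^ k
          = ∑ p : (Bool × Bool) × (Fin m → Bool × Bool), (g p.1 + s m p.2) ^ k := by
            apply Fintype.sum_equiv (Fin.consEquiv fun _ => Bool × Bool).symm
            intro q
            have hs : s (m + 1) q = g (q 0) + s m (fun i => q i.succ) := by
              simp [s, Fin.sum_univ_succ]
            rw [hs]
            rfl
        _ = ∑ b : Bool × Bool, ∑ q : Fin m → Bool × Bool, (g b + s m q) ^ k :=
            Fintype.sum_prod_type _
    have inner1 : ∀ x : ℝ, ∑ q : Fin m → Bool × Bool, (x + s m q) ^ 1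
        = 4 ^ m * x := by
      intro x
      have e : ∀ q : Fin m → Bool × Bool, (x + s m q) ^ 1 = x + s m q := fun q => by ring
      rw [Finset.sum_congr rfl (fun q _ => e q), Finset.sum_add_distrib, h1,
        Finset.sum_const, card_fun, nsmul_eq_mul]
      push_cast; ring
    have inner2 : ∀ x : ℝ, ∑ q : Fin m → Bool × Bool, (x + s m q) ^ 2
        = 4 ^ m * x ^ 2 + 2 * (m : ℝ) * 4 ^ m := by
      intro x
      have e : ∀ q : Fin m → Bool × Bool, (x + s m q) ^ 2
          = x ^ 2 + (2 * x) * s m q + (s m q) ^ 2 := fun q => by ring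
      rw [Finset.sum_congr rfl (fun q _ => e q), Finset.sum_add_distrib,
        Finset.sum_add_distrib, ← Finset.mul_sum, h1, h2,
        Finset.sum_const, card_fun, nsmul_eq_mul]
      push_cast; ring
    have inner3 : ∀ x : ℝ, ∑ q : Fin m → Bool × Bool, (x + s m q) ^ 3
        = 4 ^ m * x ^ 3 + (3 * (2 * (m : ℝ) * 4 ^ m)) * x := by
      intro x
      have e : ∀ q : Fin m → Bool × Bool, (x + s m q) ^ 3
          = x ^ 3 + (3 * x ^ 2) * s m q + (3 * x) * (s m q) ^ 2 + (s m q) ^ 3 :=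
        fun q => by ring
      rw [Finset.sum_congr rfl (fun q _ => e q), Finset.sum_add_distrib,
        Finset.sum_add_distrib, Finset.sum_add_distrib, ← Finset.mul_sum,
        ← Finset.mul_sum, h1, h2, h3, Finset.sum_const, card_fun, nsmul_eq_mul]
      push_cast; ring
    have inner4 : ∀ x : ℝ, ∑ q : Fin m → Bool × Bool, (x + s m q) ^ 4
        = 4 ^ m * x ^ 4 + (6 * (2 * (m : ℝ) * 4 ^ m)) * x ^ 2
          + (12 * (m : ℝ) ^ 2 - 4 * m) * 4 ^ m := by
      intro x
      have e : ∀ q : Fin m → Bool × Bool, (x + s m q) ^ 4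
          = x ^ 4 + (4 * x ^ 3) * s m q + (6 * x ^ 2) * (s m q) ^ 2
            + (4 * x) * (s m q) ^ 3 + (s m q) ^ 4 := fun q => by ring
      rw [Finset.sum_congr rfl (fun q _ => e q), Finset.sum_add_distrib,
        Finset.sum_add_distrib, Finset.sum_add_distrib, Finset.sum_add_distrib,
        ← Finset.mul_sum, ← Finset.mul_sum, ← Finset.mul_sum, h1, h2, h3, h4,
        Finset.sum_const, card_fun, nsmul_eq_mul]
      push_cast; ring
    refine ⟨?_, ?_, ?_, ?_⟩
    · have : ∑ q : Fin (m + 1) → Bool × Bool, s (m + 1) q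
          = ∑ q : Fin (m + 1) → Bool × Bool, (s (m + 1) q) ^ 1 := by
        simp
      rw [this, key 1, Finset.sum_congr rfl (fun b _ => inner1 (g b)),
        ← Finset.mul_sum, g1, mul_zero]
    · rw [key 2, Finset.sum_congr rfl (fun b _ => inner2 (g b)),
        Finset.sum_add_distrib, ← Finset.mul_sum, g2, Finset.sum_const, cardB,
        nsmul_eq_mul]
      push_cast; ring
    · rw [key 3, Finset.sum_congr rfl (fun b _ => inner3 (g b)),
        Finset.sum_add_distrib, ← Finset.mul_sum, ← Finset.mul_sum, g1, g3]
      simp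
    · rw [key 4, Finset.sum_congr rfl (fun b _ => inner4 (g b)),
        Finset.sum_add_distrib, Finset.sum_add_distrib, ← Finset.mul_sum,
        ← Finset.mul_sum, g2, g4, Finset.sum_const, cardB, nsmul_eq_mul]
      push_cast; ring

noncomputable def fdef (n : ℕ) (p : (Fin n → Bool) × (Fin n → Bool)) : ℝ :=
  ∑ i, ((if p.1 i then (1 : ℝ) else -1) - (if p.2 i then (1 : ℝ) else -1))

lemma transfer (n k : ℕ) :
    ∑ p : (Fin n → Bool) × (Fin n → Bool), (fdef n p) ^ k
      = ∑ q : Fin n → Bool × Bool, (s n q) ^ k := by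
  refine (Fintype.sum_equiv (Equiv.arrowProdEquivProdArrow (Fin n) (fun _ => Bool) (fun _ => Bool))
    (fun q => (s n q) ^ k) (fun p => (fdef n p) ^ k) ?_).symm
  intro q
  rfl

lemma card_prod_fun (n : ℕ) :
    ((Finset.univ : Finset ((Fin n → Bool) × (Fin n → Bool)))).card = 4 ^ n := by
  simp [Fintype.card_fun]
  rw [← mul_pow]; norm_num

end Stmt17Aux

open Stmt17Aux in
theorem stmt_17 (n : ℕ) (hn : 1 ≤ n) :
    (1 : ℝ) / 10 ≤
      ((Finset.univ.filter fun p : (Fin n → Bool) × (Fin n → Bool) =>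
          1 / Real.sqrt n ≤
            |(n : ℝ)⁻¹ * ∑ i, ((if p.1 i then (1 : ℝ) else -1)
              - (if p.2 i then (1 : ℝ) else -1))|).card : ℝ) / 2 ^ (2 * n) := by
  classical
  have hnpos : (0 : ℝ) < n := by exact_mod_cast hn
  have ha := Real.mul_self_sqrt hnpos.le
  have hap := Real.sqrt_pos.mpr hnpos
  have hS2 : ∑ p : (Fin n → Bool) × (Fin n → Bool), (fdef n p) ^ 2
      = 2 * (n : ℝ) * 4 ^ n := by rw [transfer]; exact (moments n).2.1
  have hS4 : ∑ p : (Fin n → Bool) × (Fin n → Bool), (fdef n p) ^ 4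
      = (12 * (n : ℝ) ^ 2 - 4 * n) * 4 ^ n := by rw [transfer]; exact (moments n).2.2.2
  have hcard := card_prod_fun n
  -- variance-type sum
  have hvar : ∑ p : (Fin n → Bool) × (Fin n → Bool), ((fdef n p) ^ 2 - n) ^ 2
      = (9 * (n : ℝ) ^ 2 - 4 * n) * 4 ^ n := by
    have e : ∀ p : (Fin n → Bool) × (Fin n → Bool),
        ((fdef n p) ^ 2 - n) ^ 2
          = (fdef n p) ^ 4 - (2 * (n : ℝ)) * (fdef n p) ^ 2 + (n : ℝ) ^ 2 :=
      fun p => by ring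
    rw [Finset.sum_congr rfl (fun p _ => e p), Finset.sum_add_distrib,
      Finset.sum_sub_distrib, ← Finset.mul_sum, hS2, hS4,
      Finset.sum_const, hcard, nsmul_eq_mul]
    push_cast; ring
  -- predicate equivalence
  have hiff : ∀ p : (Fin n → Bool) × (Fin n → Bool),
      (1 / Real.sqrt n ≤ |(n : ℝ)⁻¹ * fdef n p|) ↔ (n : ℝ) ≤ (fdef n p) ^ 2 := by
    intro p
    have h1 : |(n : ℝ)⁻¹ * fdef n p| = |fdef n p| / n := by
      rw [abs_mul, abs_of_nonneg (by positivity : (0:ℝ) ≤ (n:ℝ)⁻¹)]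
      ring
    rw [h1, div_le_div_iff₀ hap hnpos, one_mul]
    constructor
    · intro h
      have hs : Real.sqrt n ≤ |fdef n p| := by nlinarith
      have : (n : ℝ) ≤ |fdef n p| * |fdef n p| := by nlinarith
      calc (n : ℝ) ≤ |fdef n p| * |fdef n p| := this
        _ = (fdef n p) ^ 2 := by rw [abs_mul_abs_self]; ring
    · intro h
      have hs : Real.sqrt n ≤ |fdef n p| := by
        rw [← Real.sqrt_sq_eq_abs]
        exact Real.sqrt_le_sqrt h
      calc (n : ℝ) = Real.sqrt n * Real.sqrt n := ha.symm
        _ ≤ |fdef n p| * Real.sqrt n := by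
            exact mul_le_mul_of_nonneg_right hs hap.le
  set A : Finset ((Fin n → Bool) × (Fin n → Bool)) :=
    Finset.univ.filter (fun p => (n : ℝ) ≤ (fdef n p) ^ 2) with hA
  have hfilter : (Finset.univ.filter fun p : (Fin n → Bool) × (Fin n → Bool) =>
      1 / Real.sqrt n ≤
        |(n : ℝ)⁻¹ * ∑ i, ((if p.1 i then (1 : ℝ) else -1)
          - (if p.2 i then (1 : ℝ) else -1))|) = A := by
    rw [hA]
    apply Finset.filter_congr
    intro p _
    exact hiff p
  rw [hfilter]
  -- lower bound on sum over A
  have htot : ∑ p : (Fin n → Bool) × (Fin n → Bool), ((fdef n p) ^ 2 - (n : ℝ))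
      = (n : ℝ) * 4 ^ n := by
    rw [Finset.sum_sub_distrib, hS2, Finset.sum_const, hcard, nsmul_eq_mul]
    push_cast; ring
  have hcomp : ∑ p ∈ Finset.univ.filter
      (fun p : (Fin n → Bool) × (Fin n → Bool) => ¬ ((n : ℝ) ≤ (fdef n p) ^ 2)),
      ((fdef n p) ^ 2 - (n : ℝ)) ≤ 0 := by
    apply Finset.sum_nonpos
    intro p hp
    rw [Finset.mem_filter] at hp
    have := hp.2
    push_neg at this
    linarith
  have hsplit := Finset.sum_filter_add_sum_filter_not Finset.univ
    (fun p : (Fin n → Bool) × (Fin n → Bool) => (n : ℝ) ≤ (fdef n p) ^ 2)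
    (fun p => (fdef n p) ^ 2 - (n : ℝ))
  have hsub : (n : ℝ) * 4 ^ n ≤ ∑ p ∈ A, ((fdef n p) ^ 2 - (n : ℝ)) := by
    rw [hA]; linarith [hsplit, hcomp, htot.symm, htot]
  -- Cauchy-Schwarz
  have hCS := Finset.sum_mul_sq_le_sq_mul_sq A
    (fun p => (fdef n p) ^ 2 - (n : ℝ)) (fun _ => (1 : ℝ))
  simp only [mul_one, one_pow] at hCS
  have hA2 : ∑ p ∈ A, ((fdef n p) ^ 2 - (n : ℝ)) ^ 2 ≤ 9 * (n : ℝ) ^ 2 * 4 ^ n := by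
    have hsubset : ∑ p ∈ A, ((fdef n p) ^ 2 - (n : ℝ)) ^ 2
        ≤ ∑ p : (Fin n → Bool) × (Fin n → Bool), ((fdef n p) ^ 2 - (n : ℝ)) ^ 2 :=
      Finset.sum_le_sum_of_subset_of_nonneg (Finset.filter_subset _ _)
        (fun p _ _ => sq_nonneg _)
    rw [hvar] at hsubset
    have h4 : (0 : ℝ) ≤ 4 ^ n := by positivity
    nlinarith
  set C : ℝ := (A.card : ℝ) with hC
  have hCnonneg : (0 : ℝ) ≤ C := by positivity
  have hcard1 : (∑ p ∈ A, (1 : ℝ)) = C := by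
    rw [Finset.sum_const, nsmul_eq_mul, mul_one]
  rw [hcard1] at hCS
  have hchain : ((n : ℝ) * 4 ^ n) ^ 2 ≤ 9 * (n : ℝ) ^ 2 * 4 ^ n * C := by
    have hsq : ((n : ℝ) * 4 ^ n) ^ 2 ≤ (∑ p ∈ A, ((fdef n p) ^ 2 - (n : ℝ))) ^ 2 := by
      apply pow_le_pow_left₀ (by positivity) hsub
    calc ((n : ℝ) * 4 ^ n) ^ 2 ≤ (∑ p ∈ A, ((fdef n p) ^ 2 - (n : ℝ))) ^ 2 := hsq
      _ ≤ (∑ p ∈ A, ((fdef n p) ^ 2 - (n : ℝ)) ^ 2) * C := hCS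
      _ ≤ 9 * (n : ℝ) ^ 2 * 4 ^ n * C := by
          apply mul_le_mul_of_nonneg_right hA2 hCnonneg
  have h9 : (4 : ℝ) ^ n ≤ 9 * C := by
    have hpos : (0 : ℝ) < (n : ℝ) ^ 2 * 4 ^ n := by positivity
    have := (mul_le_mul_iff_right₀ hpos).mp
      (by nlinarith : (n : ℝ) ^ 2 * 4 ^ n * (4 ^ n) ≤ (n : ℝ) ^ 2 * 4 ^ n * (9 * C))
    exact this
  have h2n : (2 : ℝ) ^ (2 * n) = 4 ^ n := by
    rw [pow_mul]; norm_num
  rw [h2n, div_le_div_iff₀ (by norm_num) (by positivity)]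
  nlinarith
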